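/- If a graph G has r-admissibility at most k (with k ≥ 2), then col_r(G) ≤ k·(k−1)^{r−1} and wcol_r(G) ≤ (k^{r+1} − 1)/(k − 1). -/

import Mathlib

open SimpleGraph

variable {V : Type*}

/-- The strict order relation of a linear order. -/
def olt (σ : LinearOrder V) (a b : V) : Prop := σ.lt a b

/-- The set of vertices `r`-reachable from `u` with respect to `σ`:
vertices `v >_σ u` joined to `u` by a path of length at most `r`
whose internal vertices all precede `u` in `σ`. -/
def reachSet (G : SimpleGraph V) (σ : LinearOrder V) (r : ℕ) (u : V) : Set V :=
  {v | olt σ u v ∧ ∃ p : G.Walk u v, p.IsPath ∧ p.length ≤ r ∧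
    ∀ w ∈ p.support, w ≠ u → w ≠ v → olt σ w u}

/-- The set of vertices weakly `r`-reachable from `u` with respect to `σ`:
vertices `v >_σ u` joined to `u` by a path of length at most `r`
whose internal vertices all precede `v` in `σ`. -/
def wreachSet (G : SimpleGraph V) (σ : LinearOrder V) (r : ℕ) (u : V) : Set V :=
  {v | olt σ u v ∧ ∃ p : G.Walk u v, p.IsPath ∧ p.length ≤ r ∧
    ∀ w ∈ p.support, w ≠ u → w ≠ v → olt σ w v}

/-- `col_r(G_σ)`: the maximum `r`-reach over all vertices. -/
noncomputable def colOrd [Fintype V] (G : SimpleGraph V) (σ : LinearOrder V) (r : ℕ) : ℕ :=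
  Finset.univ.sup fun u => (reachSet G σ r u).ncard

/-- `wcol_r(G_σ)`: the maximum weak `r`-reach over all vertices. -/
noncomputable def wcolOrd [Fintype V] (G : SimpleGraph V) (σ : LinearOrder V) (r : ℕ) : ℕ :=
  Finset.univ.sup fun u => (wreachSet G σ r u).ncard

/-- The `r`-coloring number of `G`. -/
noncomputable def colNum [Fintype V] (G : SimpleGraph V) (r : ℕ) : ℕ :=
  ⨅ σ : LinearOrder V, colOrd G σ r

/-- The weak `r`-coloring number of `G`. -/
noncomputable def wcolNum [Fintype V] (G : SimpleGraph V) (r : ℕ) : ℕ :=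
  ⨅ σ : LinearOrder V, wcolOrd G σ r

/-- `p` is an `r`-qualifying path from `u` with respect to the (possibly partial)
order `lt`: a path of length at most `r` ending at a vertex `v` with `v ≠ u`,
`v` not `<` `u`, all of whose internal vertices are `< u`. -/
def IsQual (G : SimpleGraph V) (lt : V → V → Prop) (r : ℕ) {u v : V} (p : G.Walk u v) : Prop :=
  p.IsPath ∧ p.length ≤ r ∧ v ≠ u ∧ ¬ lt v u ∧ ∀ w ∈ p.support, w ≠ u → w ≠ v → lt w u

/-- The `r`-backconnectivity of `u`: the maximum number of `r`-qualifying paths from `u`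
that are pairwise vertex-disjoint apart from `u`. -/
noncomputable def bcon (G : SimpleGraph V) (lt : V → V → Prop) (r : ℕ) (u : V) : ℕ :=
  sSup {n | ∃ f : Fin n → (v : V) × G.Walk u v,
    (∀ i, IsQual G lt r (f i).2) ∧
    ∀ i j : Fin n, i ≠ j → ∀ w, w ∈ (f i).2.support → w ∈ (f j).2.support → w = u}

/-- A shortest `r`-qualifying path: an `r`-qualifying `u`–`v` path of length `ℓ` such that
there is no `(ℓ-1)`-qualifying `u`–`v` path. -/
def IsShortQual (G : SimpleGraph V) (lt : V → V → Prop) (r : ℕ) {u v : V} (p : G.Walk u v) :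
    Prop :=
  IsQual G lt r p ∧ ¬ ∃ q : G.Walk u v, IsQual G lt (p.length - 1) q

/-- The estimated `r`-backconnectivity of `u`: the maximum number of shortest
`r`-qualifying paths from `u` that are pairwise vertex-disjoint apart from `u`. -/
noncomputable def est (G : SimpleGraph V) (lt : V → V → Prop) (r : ℕ) (u : V) : ℕ :=
  sSup {n | ∃ f : Fin n → (v : V) × G.Walk u v,
    (∀ i, IsShortQual G lt r (f i).2) ∧
    ∀ i j : Fin n, i ≠ j → ∀ w, w ∈ (f i).2.support → w ∈ (f j).2.support → w = u}

/-- The `r`-admissibility of `G`. -/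
noncomputable def admNum [Fintype V] (G : SimpleGraph V) (r : ℕ) : ℕ :=
  ⨅ σ : LinearOrder V, Finset.univ.sup fun u => bcon G (olt σ) r u

/-- `d_v(u, G_σ)`: the least `i` such that `v` is `i`-reachable from `u`. -/
noncomputable def dval (G : SimpleGraph V) (σ : LinearOrder V) (u v : V) : ℕ :=
  sInf {i | v ∈ reachSet G σ i u}

namespace AdmThm

open SimpleGraph Walk

variable {V : Type*} {G : SimpleGraph V} {σ : LinearOrder V} {r k : ℕ}

section OltBasics

lemma olt_irrefl (σ : LinearOrder V) (a : V) : ¬ olt σ a a := by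
  letI := σ; exact lt_irrefl a

lemma olt_trans {σ : LinearOrder V} {a b c : V} (h1 : olt σ a b) (h2 : olt σ b c) :
    olt σ a c := by
  letI := σ; exact lt_trans h1 h2

lemma olt_asymm {σ : LinearOrder V} {a b : V} (h1 : olt σ a b) : ¬ olt σ b a := by
  letI := σ; exact lt_asymm h1

lemma olt_of_not {σ : LinearOrder V} {a b : V} (hne : a ≠ b) (h : ¬ olt σ a b) :
    olt σ b a := by
  letI := σ
  rcases lt_trichotomy a b with h1 | h1 | h1
  · exact absurd h1 h
  · exact absurd h1 hne
  · exact h1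

lemma olt_trichotomy (σ : LinearOrder V) (a b : V) : olt σ a b ∨ a = b ∨ olt σ b a := by
  letI := σ; exact lt_trichotomy a b

end OltBasics

section ListLex

/-- Appending to equal-length lex-comparable lists preserves lex. -/
lemma lex_append {lt : V → V → Prop} :
    ∀ {a b : List V}, a.length = b.length → List.Lex lt a b →
      ∀ (s t : List V), List.Lex lt (a ++ s) (b ++ t) := by
  intro a b hlen h
  induction h with
  | nil => simp at hlen
  | @cons x l₁ l₂ h ih =>
    intro s t
    exact List.Lex.cons (ih (by simpa using hlen) s t)
  | @rel x l₁ y l₂ h =>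
    intro s t
    exact List.Lex.rel h

/-- Trichotomy for lex on equal-length lists. -/
lemma lex_trichot (σ : LinearOrder V) :
    ∀ (a b : List V), a.length = b.length → a ≠ b →
      List.Lex (olt σ) a b ∨ List.Lex (olt σ) b a := by
  intro a
  induction a with
  | nil => intro b hlen _; cases b with
    | nil => simp_all
    | cons x l => simp at hlen
  | cons x l ih =>
    intro b hlen hne
    cases b with
    | nil => simp at hlen
    | cons y m =>
      rcases olt_trichotomy σ x y with h | rfl | h
      · exact Or.inl (List.Lex.rel h)
      · have hne' : l ≠ m := fun h => hne (by rw [h])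
        rcases ih m (by simpa using hlen) hne' with h | h
        · exact Or.inl (List.Lex.cons h)
        · exact Or.inr (List.Lex.cons h)
      · exact Or.inr (List.Lex.rel h)

/-- A nonempty finite set has a minimal element w.r.t. any transitive irreflexive relation. -/
lemma exists_min_rel {α : Type*} (lt : α → α → Prop)
    (htr : ∀ {a b c}, lt a b → lt b c → lt a c)
    (hir : ∀ a, ¬ lt a a) (s : Finset α) (hne : s.Nonempty) :
    ∃ a ∈ s, ∀ b ∈ s, ¬ lt b a := by
  classical
  revert hne
  induction s using Finset.induction_on with
  | empty => intro hne; exact absurd hne (by simp)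
  | @insert a t ha ih =>
    intro _
    rcases t.eq_empty_or_nonempty with rfl | htne
    · refine ⟨a, by simp, ?_⟩
      intro b hb
      simp only [Finset.mem_insert, Finset.notMem_empty, or_false] at hb
      subst hb; exact hir _
    · obtain ⟨m, hm, hmin⟩ := ih htne
      by_cases hc : lt a m
      · refine ⟨a, by simp, ?_⟩
        intro b hb
        rcases Finset.mem_insert.mp hb with rfl | hb
        · exact hir b
        · intro hba
          exact hmin b hb (htr hba hc)
      · refine ⟨m, Finset.mem_insert_of_mem hm, ?_⟩
        intro b hb
        rcases Finset.mem_insert.mp hb with rfl | hb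
        · exact hc
        · exact hmin b hb

end ListLex

section WalkTools

variable {u v z x : V}

lemma getVert_mem_support (p : G.Walk u v) {i : ℕ} (hi : i ≤ p.length) :
    p.getVert i ∈ p.support :=
  Walk.mem_support_iff_exists_getVert.2 ⟨i, rfl, hi⟩

lemma getVert_injOn {p : G.Walk u v} (hp : p.IsPath) :
    ∀ {i j : ℕ}, i ≤ p.length → j ≤ p.length → p.getVert i = p.getVert j → i = j := by
  induction p with
  | nil => intro i j hi hj _; simp at hi hj; omega
  | @cons a b c h q ih =>
    intro i j hi hj hij
    rw [Walk.cons_isPath_iff] at hp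
    cases i with
    | zero =>
      cases j with
      | zero => rfl
      | succ j =>
        exfalso
        apply hp.2
        rw [Walk.length_cons] at hj
        have h1 : (Walk.cons h q).getVert (j+1) = q.getVert j := Walk.getVert_cons_succ q h
        have h0 : (Walk.cons h q).getVert 0 = a := Walk.getVert_zero _
        rw [h1, h0] at hij
        rw [hij]
        exact getVert_mem_support q (by omega)
    | succ i =>
      cases j with
      | zero =>
        exfalso
        apply hp.2
        rw [Walk.length_cons] at hi
        have h1 : (Walk.cons h q).getVert (i+1) = q.getVert i := Walk.getVert_cons_succ q h
        have h0 : (Walk.cons h q).getVert 0 = a := Walk.getVert_zero _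
        rw [h1, h0] at hij
        rw [← hij]
        exact getVert_mem_support q (by omega)
      | succ j =>
        rw [Walk.length_cons] at hi hj
        have h1 : (Walk.cons h q).getVert (i+1) = q.getVert i := Walk.getVert_cons_succ q h
        have h2 : (Walk.cons h q).getVert (j+1) = q.getVert j := Walk.getVert_cons_succ q h
        rw [h1, h2] at hij
        have := ih hp.1 (by omega) (by omega) hij
        omega

lemma eq_of_support_eq : ∀ {u v : V} (p q : G.Walk u v), p.support = q.support → p = q := by
  intro u v p
  induction p with
  | nil =>
    intro q h
    cases q with
    | nil => rfl
    | cons hadj q' =>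
      exfalso
      rw [Walk.support_nil, Walk.support_cons] at h
      have := congrArg List.length h
      simp [Walk.length_support] at this
  | @cons a b c hadj p' ih =>
    intro q h
    cases q with
    | nil =>
      exfalso
      rw [Walk.support_nil, Walk.support_cons] at h
      have := congrArg List.length h
      simp [Walk.length_support] at this
    | @cons _ b' _ hadj2 q' =>
      rw [Walk.support_cons, Walk.support_cons] at h
      have htail : p'.support = q'.support := by injection h
      have hb : b = b' := by
        have e1 := p'.support_eq_cons
        have e2 := q'.support_eq_cons
        rw [e1, e2] at htail
        injection htail
      subst hb
      rw [ih q' htail]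

variable [DecidableEq V]

/-- The depth of a vertex along a walk. -/
noncomputable def dep (p : G.Walk u v) (z : V) (h : z ∈ p.support) : ℕ :=
  (p.takeUntil z h).length

lemma dep_le (p : G.Walk u v) (h : z ∈ p.support) : dep p z h ≤ p.length :=
  Walk.length_takeUntil_le p h

lemma dep_add (p : G.Walk u v) (h : z ∈ p.support) :
    dep p z h + (p.dropUntil z h).length = p.length := by
  have := congrArg Walk.length (p.take_spec h)
  rwa [Walk.length_append] at this

lemma getVert_dep (p : G.Walk u v) (h : z ∈ p.support) :
    p.getVert (dep p z h) = z := by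
  have H := Walk.getVert_append (p.takeUntil z h) (p.dropUntil z h) (dep p z h)
  rw [p.take_spec h] at H
  rw [H]
  have : ¬ dep p z h < (p.takeUntil z h).length := by simp [dep]
  rw [if_neg this]
  have : dep p z h - (p.takeUntil z h).length = 0 := by simp [dep]
  rw [this, Walk.getVert_zero]

lemma dep_getVert {p : G.Walk u v} (hp : p.IsPath) {i : ℕ} (hi : i ≤ p.length)
    (h : p.getVert i ∈ p.support) : dep p (p.getVert i) h = i :=
  getVert_injOn hp (dep_le p h) hi (getVert_dep p h)

lemma getVert_take (p : G.Walk u v) (h : z ∈ p.support) {m : ℕ} (hm : m ≤ dep p z h) :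
    (p.takeUntil z h).getVert m = p.getVert m := by
  have H := Walk.getVert_append (p.takeUntil z h) (p.dropUntil z h) m
  rw [p.take_spec h] at H
  rw [H]
  rcases lt_or_eq_of_le hm with hm' | hm'
  · rw [if_pos (show m < (p.takeUntil z h).length from hm')]
  · subst hm'
    rw [if_neg (by simp [dep])]
    have h1 : dep p z h - (p.takeUntil z h).length = 0 := by simp [dep]
    rw [h1, Walk.getVert_zero]
    have : (p.takeUntil z h).length = dep p z h := rfl
    rw [← this, Walk.getVert_length]

lemma getVert_drop (p : G.Walk u v) (h : z ∈ p.support) (m : ℕ) :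
    (p.dropUntil z h).getVert m = p.getVert (dep p z h + m) := by
  have H := Walk.getVert_append (p.takeUntil z h) (p.dropUntil z h) (dep p z h + m)
  rw [p.take_spec h] at H
  rw [H]
  have hlen : (p.takeUntil z h).length = dep p z h := rfl
  rw [if_neg (by omega), hlen]
  congr 1
  omega

lemma dep_of_mem_take {p : G.Walk u v} (hp : p.IsPath) (h : z ∈ p.support)
    (hx : x ∈ (p.takeUntil z h).support) :
    dep p x (p.support_takeUntil_subset h hx) ≤ dep p z h := by
  obtain ⟨m, hm, hmle⟩ := Walk.mem_support_iff_exists_getVert.1 hx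
  have hgv : p.getVert m = x := by rw [← getVert_take p h hmle, hm]
  have heq : dep p x (p.support_takeUntil_subset h hx) = m := by
    have h2 := getVert_dep p (p.support_takeUntil_subset h hx)
    exact getVert_injOn hp (dep_le _ _) (le_trans hmle (dep_le p h)) (by rw [h2, hgv])
  rw [heq]
  exact hmle

lemma mem_take_of_dep_le {p : G.Walk u v} (h : z ∈ p.support) (hx : x ∈ p.support)
    (hle : dep p x hx ≤ dep p z h) : x ∈ (p.takeUntil z h).support := by
  rw [Walk.mem_support_iff_exists_getVert]
  refine ⟨dep p x hx, ?_, hle⟩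
  rw [getVert_take p h hle, getVert_dep]

lemma dep_of_mem_drop {p : G.Walk u v} (hp : p.IsPath) (h : z ∈ p.support)
    (hx : x ∈ (p.dropUntil z h).support) :
    dep p z h ≤ dep p x (p.support_dropUntil_subset h hx) := by
  obtain ⟨m, hm, hmle⟩ := Walk.mem_support_iff_exists_getVert.1 hx
  rw [getVert_drop p h m] at hm
  have hdm : dep p z h + m ≤ p.length := by
    have := dep_add p h; omega
  have : dep p x (p.support_dropUntil_subset h hx) = dep p z h + m := by
    have h2 := getVert_dep p (p.support_dropUntil_subset h hx)
    exact getVert_injOn hp (dep_le _ _) hdm (by rw [h2, hm])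
  omega

lemma mem_drop_of_dep_ge {p : G.Walk u v} (h : z ∈ p.support) (hx : x ∈ p.support)
    (hge : dep p z h ≤ dep p x hx) : x ∈ (p.dropUntil z h).support := by
  rw [Walk.mem_support_iff_exists_getVert]
  refine ⟨dep p x hx - dep p z h, ?_, ?_⟩
  · rw [getVert_drop]
    rw [Nat.add_sub_cancel' hge]
    exact getVert_dep p hx
  · have h1 := dep_add p h
    have h2 := dep_le p hx
    omega

lemma eq_of_mem_take_drop {p : G.Walk u v} (hp : p.IsPath) (h : z ∈ p.support)
    (hx1 : x ∈ (p.takeUntil z h).support) (hx2 : x ∈ (p.dropUntil z h).support) : x = z := by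
  have h1 := dep_of_mem_take hp h hx1
  have h2 := dep_of_mem_drop hp h hx2
  have : dep p x (p.support_takeUntil_subset h hx1) = dep p z h := le_antisymm h1 h2
  rw [← getVert_dep p (p.support_takeUntil_subset h hx1), this, getVert_dep]

lemma dep_start {p : G.Walk u v} (hp : p.IsPath) (h : u ∈ p.support) : dep p u h = 0 := by
  have := getVert_dep p h
  have h0 : p.getVert 0 = u := Walk.getVert_zero p
  exact getVert_injOn hp (dep_le p h) (by omega) (by rw [this, h0])

lemma dep_end {p : G.Walk u v} (hp : p.IsPath) (h : v ∈ p.support) : dep p v h = p.length := by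
  have := getVert_dep p h
  have h0 : p.getVert p.length = v := Walk.getVert_length p
  exact getVert_injOn hp (dep_le p h) (le_refl _) (by rw [this, h0])

lemma eq_end_of_dep_eq {p : G.Walk u v} (hp : p.IsPath) (h : z ∈ p.support)
    (hd : dep p z h = p.length) : z = v := by
  rw [← getVert_dep p h, hd, Walk.getVert_length]

lemma eq_start_of_dep_eq {p : G.Walk u v} (h : z ∈ p.support)
    (hd : dep p z h = 0) : z = u := by
  rw [← getVert_dep p h, hd, Walk.getVert_zero]

end WalkTools
section ThePath

lemma lex_trans {lt : V → V → Prop} (htr : ∀ a b c, lt a b → lt b c → lt a c) :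
    ∀ {a b c : List V}, List.Lex lt a b → List.Lex lt b c → List.Lex lt a c := by
  intro a b c h1
  induction h1 generalizing c with
  | nil =>
    intro h2
    cases h2 with
    | cons h => exact List.Lex.nil
    | rel h => exact List.Lex.nil
  | @cons x l₁ l₂ h ih =>
    intro h2
    cases h2 with
    | cons h' => exact List.Lex.cons (ih h')
    | rel h' => exact List.Lex.rel h'
  | @rel x l₁ y l₂ h =>
    intro h2
    cases h2 with
    | cons h' => exact List.Lex.rel h
    | rel h' => exact List.Lex.rel (htr _ _ _ h h')

lemma lex_irrefl {lt : V → V → Prop} (hir : ∀ a, ¬ lt a a) :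
    ∀ (a : List V), ¬ List.Lex lt a a := by
  intro a
  induction a with
  | nil => intro h; cases h
  | cons x l ih =>
    intro h
    cases h with
    | cons h' => exact ih h'
    | rel h' => exact hir x h'

variable [DecidableEq V] [Fintype V] (G : SimpleGraph V) (σ : LinearOrder V) (r : ℕ)

lemma reach_iff_qual {u v : V} :
    v ∈ reachSet G σ r u ↔ ∃ p : G.Walk u v, IsQual G (olt σ) r p := by
  constructor
  · rintro ⟨hlt, p, hp, hlen, hint⟩
    exact ⟨p, hp, hlen, fun h => olt_irrefl σ u (h ▸ hlt), olt_asymm hlt, hint⟩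
  · rintro ⟨p, hp, hlen, hne, hnlt, hint⟩
    exact ⟨olt_of_not hne hnlt, p, hp, hlen, hint⟩

lemma exists_thePath (u v : V) (hv : v ∈ reachSet G σ r u) :
    ∃ p : G.Walk u v, IsQual G (olt σ) r p ∧
      (∀ q : G.Walk u v, IsQual G (olt σ) r q → p.length ≤ q.length) ∧
      (∀ q : G.Walk u v, IsQual G (olt σ) r q → q.length = p.length →
        ¬ List.Lex (olt σ) q.support p.support) := by
  obtain ⟨p₀, hp₀⟩ := (reach_iff_qual G σ r).1 hv
  -- minimal length
  set L : Set ℕ := {n | ∃ p : G.Walk u v, IsQual G (olt σ) r p ∧ p.length = n} with hL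
  have hLne : L.Nonempty := ⟨p₀.length, p₀, hp₀, rfl⟩
  have hmem := Nat.sInf_mem hLne
  obtain ⟨p₁, hp₁, hp₁len⟩ := hmem
  have hmin : ∀ q : G.Walk u v, IsQual G (olt σ) r q → sInf L ≤ q.length := by
    intro q hq
    exact Nat.sInf_le ⟨q, hq, rfl⟩
  -- the finite set of minimal-length qualifying paths
  haveI : LocallyFinite G := fun w => (Set.toFinite (G.neighborSet w)).fintype
  have hfin : {p : G.Walk u v | IsQual G (olt σ) r p ∧ p.length = sInf L}.Finite := by
    apply Set.Finite.subset ((G.finsetWalkLength (sInf L) u v).finite_toSet)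
    intro q hq
    simp only [Finset.mem_coe, SimpleGraph.mem_finsetWalkLength_iff]
    exact hq.2
  have hne : (hfin.toFinset).Nonempty := by
    rw [Set.Finite.toFinset_nonempty]
    exact ⟨p₁, hp₁, hp₁len⟩
  obtain ⟨p, hpmem, hplex⟩ := exists_min_rel
    (fun (p q : G.Walk u v) => List.Lex (olt σ) p.support q.support)
    (fun h1 h2 => lex_trans (lt := olt σ) (fun _ _ _ hab hbc => olt_trans hab hbc) h1 h2)
    (fun q => lex_irrefl (olt_irrefl σ) q.support) hfin.toFinset hne
  rw [Set.Finite.mem_toFinset] at hpmem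
  refine ⟨p, hpmem.1, ?_, ?_⟩
  · intro q hq; rw [hpmem.2]; exact hmin q hq
  · intro q hq hqlen hlex
    have : q ∈ hfin.toFinset := by
      rw [Set.Finite.mem_toFinset]
      exact ⟨hq, by rw [hqlen, hpmem.2]⟩
    exact hplex q this hlex

/-- The canonical (shortest, lexicographically minimal) qualifying path. -/
noncomputable def thePath (u v : V) (hv : v ∈ reachSet G σ r u) : G.Walk u v :=
  (exists_thePath G σ r u v hv).choose

lemma thePath_qual (u v : V) (hv : v ∈ reachSet G σ r u) :
    IsQual G (olt σ) r (thePath G σ r u v hv) :=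
  (exists_thePath G σ r u v hv).choose_spec.1

lemma thePath_min (u v : V) (hv : v ∈ reachSet G σ r u) (q : G.Walk u v)
    (hq : IsQual G (olt σ) r q) : (thePath G σ r u v hv).length ≤ q.length :=
  (exists_thePath G σ r u v hv).choose_spec.2.1 q hq

lemma thePath_lexmin (u v : V) (hv : v ∈ reachSet G σ r u) (q : G.Walk u v)
    (hq : IsQual G (olt σ) r q) (hlen : q.length = (thePath G σ r u v hv).length) :
    ¬ List.Lex (olt σ) q.support (thePath G σ r u v hv).support :=
  (exists_thePath G σ r u v hv).choose_spec.2.2 q hq hlen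

variable {G σ r}

lemma thePath_isPath {u v : V} (hv : v ∈ reachSet G σ r u) :
    (thePath G σ r u v hv).IsPath := (thePath_qual G σ r u v hv).1

/-- The key depth lemma (abstract form): if `P` is qualifying and `Q` is qualifying and
length-minimal, a common vertex cannot be strictly deeper on `Q`. -/
lemma dep_aux {u v w z : V} (P : G.Walk u v) (Q : G.Walk u w)
    (hPq : IsQual G (olt σ) r P) (hQq : IsQual G (olt σ) r Q)
    (hQmin : ∀ q : G.Walk u w, IsQual G (olt σ) r q → Q.length ≤ q.length)
    (hzP : z ∈ P.support) (hzQ : z ∈ Q.support)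
    (hlt : dep P z hzP < dep Q z hzQ) : False := by
  obtain ⟨hPpath, hPlen, hPvne, hPvnlt, hPint⟩ := hPq
  obtain ⟨hQpath, hQlen, hQwne, hQwnlt, hQint⟩ := hQq
  have hzu : z ≠ u := by
    intro h
    subst h
    rw [dep_start hQpath hzQ] at hlt
    omega
  by_cases hzv : z = v
  · subst hzv
    have hdP : dep P z hzP = P.length := dep_end hPpath hzP
    by_cases hvw : z = w
    · subst hvw
      have h1 := hQmin P ⟨hPpath, hPlen, hPvne, hPvnlt, hPint⟩
      have h2 := dep_le Q hzQ
      omega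
    · exact hPvnlt (hQint z hzQ hzu hvw)
  · set H := (P.takeUntil z hzP).append (Q.dropUntil z hzQ) with hHdef
    have hHlen : H.length = dep P z hzP + (Q.dropUntil z hzQ).length := by
      rw [hHdef, Walk.length_append]; rfl
    have hQsplit := dep_add Q hzQ
    have hHlt : H.length < Q.length := by omega
    have hBspt := H.support_bypass_subset
    have hBqual : IsQual G (olt σ) r H.bypass := by
      refine ⟨H.bypass_isPath, ?_, hQwne, hQwnlt, ?_⟩
      · have := H.length_bypass_le
        omega
      · intro x hx hxu hxw
        have hxH : x ∈ H.support := hBspt hx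
        rw [hHdef, Walk.mem_support_append_iff] at hxH
        rcases hxH with hxT | hxD
        · have hxP : x ∈ P.support := P.support_takeUntil_subset hzP hxT
          have hxv : x ≠ v := by
            intro h
            subst h
            have h1 := dep_of_mem_take hPpath hzP hxT
            have h4 : dep P x (P.support_takeUntil_subset hzP hxT) = P.length :=
              dep_end hPpath _
            rw [h4] at h1
            have h5 := dep_le P hzP
            have h6 : dep P z hzP = P.length := by omega
            exact hzv (eq_end_of_dep_eq hPpath hzP h6)
          exact hPint x hxP hxu hxv
        · exact hQint x (Q.support_dropUntil_subset hzQ hxD) hxu hxw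
    have h7 := hQmin H.bypass hBqual
    have h8 := H.length_bypass_le
    omega

lemma dep_eq_dep {u v w z : V} (hv : v ∈ reachSet G σ r u) (hw : w ∈ reachSet G σ r u)
    (hzP : z ∈ (thePath G σ r u v hv).support) (hzQ : z ∈ (thePath G σ r u w hw).support) :
    dep (thePath G σ r u v hv) z hzP = dep (thePath G σ r u w hw) z hzQ := by
  rcases lt_trichotomy (dep (thePath G σ r u v hv) z hzP)
      (dep (thePath G σ r u w hw) z hzQ) with h | h | h
  · exact absurd h (fun h => dep_aux _ _ (thePath_qual G σ r u v hv)
      (thePath_qual G σ r u w hw) (thePath_min G σ r u w hw) hzP hzQ h)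
  · exact h
  · exact absurd h (fun h => dep_aux _ _ (thePath_qual G σ r u w hw)
      (thePath_qual G σ r u v hv) (thePath_min G σ r u v hv) hzQ hzP h)

end ThePath
section Laminar

variable [DecidableEq V] [Fintype V] {G : SimpleGraph V} {σ : LinearOrder V} {r : ℕ}

lemma lam_aux {u v w z : V} (P : G.Walk u v) (Q : G.Walk u w)
    (hPq : IsQual G (olt σ) r P) (hQq : IsQual G (olt σ) r Q)
    (hPlex : ∀ q : G.Walk u v, IsQual G (olt σ) r q → q.length = P.length →
      ¬ List.Lex (olt σ) q.support P.support)
    (hvw : v ≠ w)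
    (hzP : z ∈ P.support) (hzQ : z ∈ Q.support)
    (hd : dep P z hzP = dep Q z hzQ)
    (hdep : ∀ x (hxP : x ∈ P.support) (hxQ : x ∈ Q.support), dep P x hxP = dep Q x hxQ)
    (hlex : List.Lex (olt σ) (Q.takeUntil z hzQ).support (P.takeUntil z hzP).support) :
    False := by
  obtain ⟨hPpath, hPlen, hPvne, hPvnlt, hPint⟩ := hPq
  obtain ⟨hQpath, hQlen, hQwne, hQwnlt, hQint⟩ := hQq
  set H := (Q.takeUntil z hzQ).append (P.dropUntil z hzP) with hHdef
  have hTQlen : (Q.takeUntil z hzQ).length = dep Q z hzQ := rfl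
  have hPsplit := dep_add P hzP
  have hHlen : H.length = P.length := by
    rw [hHdef, Walk.length_append, hTQlen]
    omega
  -- w is not on the prefix of Q (otherwise z = w lies internally on P: contradiction)
  have hwTQ : w ∉ (Q.takeUntil z hzQ).support := by
    intro hmem
    have h1 := dep_of_mem_take hQpath hzQ hmem
    have h2 : dep Q w (Q.support_takeUntil_subset hzQ hmem) = Q.length := dep_end hQpath _
    have h3 := dep_le Q hzQ
    have h4 : dep Q z hzQ = Q.length := by omega
    have h5 : z = w := eq_end_of_dep_eq hQpath hzQ h4
    subst h5
    exact hQwnlt (hPint z hzP hQwne (fun h => hvw h.symm))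
  -- disjointness of the two pieces
  have hdisj : ∀ x ∈ (Q.takeUntil z hzQ).support, x ∉ (P.dropUntil z hzP).support.tail := by
    intro x hxT hxD
    have hxDs : x ∈ (P.dropUntil z hzP).support := List.mem_of_mem_tail hxD
    have hxQ : x ∈ Q.support := Q.support_takeUntil_subset hzQ hxT
    have hxP : x ∈ P.support := P.support_dropUntil_subset hzP hxDs
    have e1 := dep_of_mem_take hQpath hzQ hxT
    have e2 := dep_of_mem_drop hPpath hzP hxDs
    have e3 := hdep x hxP hxQ
    have e4 : dep P x hxP = dep P z hzP := by
      have := hd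
      omega
    have hxz : x = z := by
      have g1 := getVert_dep P hxP
      have g2 := getVert_dep P hzP
      rw [← g1, e4, g2]
    subst hxz
    have hnd := (hPpath.dropUntil hzP).support_nodup
    rw [Walk.support_eq_cons] at hnd
    exact (List.nodup_cons.1 hnd).1 hxD
  have hHsupp : H.support = (Q.takeUntil z hzQ).support ++ (P.dropUntil z hzP).support.tail :=
    Walk.support_append _ _
  have hHpath : H.IsPath := by
    rw [Walk.isPath_def, hHsupp, List.nodup_append]
    exact ⟨(hQpath.takeUntil hzQ).support_nodup,
      ((hPpath.dropUntil hzP).support_nodup).tail, fun a ha b hb hab => hdisj a ha (hab ▸ hb)⟩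
  have hHqual : IsQual G (olt σ) r H := by
    refine ⟨hHpath, by omega, hPvne, hPvnlt, ?_⟩
    intro x hx hxu hxv
    rw [hHdef, Walk.mem_support_append_iff] at hx
    rcases hx with hxT | hxD
    · have hxw : x ≠ w := fun h => hwTQ (h ▸ hxT)
      exact hQint x (Q.support_takeUntil_subset hzQ hxT) hxu hxw
    · exact hPint x (P.support_dropUntil_subset hzP hxD) hxu hxv
  apply hPlex H hHqual hHlen
  have hPsupp : P.support = (P.takeUntil z hzP).support ++ (P.dropUntil z hzP).support.tail := by
    conv_lhs => rw [← P.take_spec hzP]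
    exact Walk.support_append _ _
  rw [hHsupp, hPsupp]
  apply lex_append _ hlex
  rw [Walk.length_support, Walk.length_support]
  show dep Q z hzQ + 1 = dep P z hzP + 1
  omega

lemma take_eq_take {u v w z : V} (hv : v ∈ reachSet G σ r u) (hw : w ∈ reachSet G σ r u)
    (hzP : z ∈ (thePath G σ r u v hv).support) (hzQ : z ∈ (thePath G σ r u w hw).support) :
    ((thePath G σ r u v hv).takeUntil z hzP) = ((thePath G σ r u w hw).takeUntil z hzQ) := by
  by_cases hvw : v = w
  · subst hvw
    rfl
  · have hd := dep_eq_dep hv hw hzP hzQ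
    apply eq_of_support_eq
    by_contra hne
    have hlen : ((thePath G σ r u v hv).takeUntil z hzP).support.length
        = ((thePath G σ r u w hw).takeUntil z hzQ).support.length := by
      rw [Walk.length_support, Walk.length_support]
      show dep _ z hzP + 1 = dep _ z hzQ + 1
      omega
    rcases lex_trichot σ _ _ hlen hne with h | h
    · exact lam_aux _ _ (thePath_qual G σ r u w hw) (thePath_qual G σ r u v hv)
        (thePath_lexmin G σ r u w hw) (fun hh => hvw hh.symm) hzQ hzP hd.symm
        (fun x hxP hxQ => dep_eq_dep hw hv hxP hxQ) h
    · exact lam_aux _ _ (thePath_qual G σ r u v hv) (thePath_qual G σ r u w hw)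
        (thePath_lexmin G σ r u v hv) hvw hzP hzQ hd
        (fun x hxP hxQ => dep_eq_dep hv hw hxP hxQ) h

end Laminar
section Branching

variable [DecidableEq V] [Fintype V] {G : SimpleGraph V} {σ : LinearOrder V} {r k : ℕ}

lemma succ_shared {u v v' x t : V} (hv : v ∈ reachSet G σ r u) (hv' : v' ∈ reachSet G σ r u)
    (hx : x ∈ (thePath G σ r u v hv).support) (hx' : x ∈ (thePath G σ r u v' hv').support)
    (ht : t ∈ (thePath G σ r u v hv).support) (ht' : t ∈ (thePath G σ r u v' hv').support)
    (hdt : dep (thePath G σ r u v hv) x hx < dep (thePath G σ r u v hv) t ht) :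
    (thePath G σ r u v hv).getVert (dep (thePath G σ r u v hv) x hx + 1)
      = (thePath G σ r u v' hv').getVert (dep (thePath G σ r u v' hv') x hx' + 1) := by
  have hA := take_eq_take hv hv' ht ht'
  have hdx := dep_eq_dep hv hv' hx hx'
  have hdt' := dep_eq_dep hv hv' ht ht'
  have hle : dep (thePath G σ r u v hv) x hx + 1 ≤ dep (thePath G σ r u v hv) t ht := hdt
  have h1 := getVert_take (thePath G σ r u v hv) ht hle
  have hle' : dep (thePath G σ r u v hv) x hx + 1 ≤ dep (thePath G σ r u v' hv') t ht' := by
    omega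
  have h2 := getVert_take (thePath G σ r u v' hv') ht' hle'
  rw [← h1, hA, h2, hdx]

/-- The set of successors of `x` along canonical paths with source `u`. -/
def SuccS (G : SimpleGraph V) (σ : LinearOrder V) (r : ℕ) (u x : V) : Set V :=
  {y | ∃ (v : V) (hv : v ∈ reachSet G σ r u) (hx : x ∈ (thePath G σ r u v hv).support),
    x ≠ v ∧ (thePath G σ r u v hv).getVert (dep (thePath G σ r u v hv) x hx + 1) = y}

lemma trunc_aux {c b : V} (W : G.Walk c b) (hW : W.IsPath) :
    ∀ x, olt σ c x → ¬ olt σ b x →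
    ∃ (z : V) (T : G.Walk c z), T.IsPath ∧ T.length ≤ W.length ∧
      (∀ a ∈ T.support, a ∈ W.support) ∧ ¬ olt σ z x ∧
      (∀ a ∈ T.support, a ≠ z → olt σ a x) := by
  induction W with
  | nil => intro x h1 h2; exact absurd h1 h2
  | @cons c y b hadj W' ih =>
    intro x hcx hbx
    rw [Walk.cons_isPath_iff] at hW
    by_cases hy : olt σ y x
    · obtain ⟨z, T', hT'p, hT'len, hT'supp, hz, hint⟩ := ih hW.1 x hy hbx
      refine ⟨z, Walk.cons hadj T', ?_, ?_, ?_, hz, ?_⟩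
      · rw [Walk.cons_isPath_iff]
        exact ⟨hT'p, fun h => hW.2 (hT'supp c h)⟩
      · rw [Walk.length_cons, Walk.length_cons]; omega
      · intro a ha
        rw [Walk.support_cons] at ha ⊢
        rcases List.mem_cons.mp ha with rfl | ha
        · exact List.mem_cons_self
        · exact List.mem_cons_of_mem _ (hT'supp a ha)
      · intro a ha haz
        rw [Walk.support_cons] at ha
        rcases List.mem_cons.mp ha with rfl | ha
        · exact hcx
        · exact hint a ha haz
    · refine ⟨y, Walk.cons hadj Walk.nil, ?_, ?_, ?_, hy, ?_⟩
      · rw [Walk.cons_isPath_iff]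
        refine ⟨Walk.IsPath.nil, ?_⟩
        rw [Walk.support_nil]
        simp [hadj.ne]
      · rw [Walk.length_cons, Walk.length_cons, Walk.length_nil]; omega
      · intro a ha
        rw [Walk.support_cons, Walk.support_nil] at ha
        rw [Walk.support_cons]
        rcases List.mem_cons.mp ha with rfl | ha
        · exact List.mem_cons_self
        · simp at ha
          subst ha
          exact List.mem_cons_of_mem _ (Walk.start_mem_support W')
      · intro a ha haz
        rw [Walk.support_cons, Walk.support_nil] at ha
        rcases List.mem_cons.mp ha with rfl | ha
        · exact hcx
        · simp at ha; exact absurd ha haz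

lemma trunc {x b : V} (W : G.Walk x b) (hW : W.IsPath) (hlen : W.length ≤ r)
    (hne : b ≠ x) (hnlt : ¬ olt σ b x) :
    ∃ (z : V) (T : G.Walk x z), IsQual G (olt σ) r T ∧ (∀ a ∈ T.support, a ∈ W.support) := by
  cases W with
  | nil => exact absurd rfl hne
  | @cons _ y _ hadj W' =>
    rw [Walk.cons_isPath_iff] at hW
    rw [Walk.length_cons] at hlen
    by_cases hy : olt σ y x
    · obtain ⟨z, T', hT'p, hT'len, hT'supp, hz, hint⟩ := trunc_aux W' hW.1 x hy hnlt
      have hzW' : z ∈ W'.support := hT'supp z (Walk.end_mem_support T')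
      refine ⟨z, Walk.cons hadj T', ⟨?_, ?_, ?_, hz, ?_⟩, ?_⟩
      · rw [Walk.cons_isPath_iff]
        exact ⟨hT'p, fun h => hW.2 (hT'supp x h)⟩
      · rw [Walk.length_cons]; omega
      · intro h; subst h; exact hW.2 hzW'
      · intro a ha hax haz
        rw [Walk.support_cons] at ha
        rcases List.mem_cons.mp ha with rfl | ha
        · exact absurd rfl hax
        · exact hint a ha haz
      · intro a ha
        rw [Walk.support_cons] at ha ⊢
        rcases List.mem_cons.mp ha with rfl | ha
        · exact List.mem_cons_self
        · exact List.mem_cons_of_mem _ (hT'supp a ha)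
    · refine ⟨y, Walk.cons hadj Walk.nil, ⟨?_, ?_, hadj.ne', hy, ?_⟩, ?_⟩
      · rw [Walk.cons_isPath_iff]
        refine ⟨Walk.IsPath.nil, ?_⟩
        rw [Walk.support_nil]
        simp [hadj.ne]
      · rw [Walk.length_cons, Walk.length_nil]; omega
      · intro a ha hax hay
        rw [Walk.support_cons, Walk.support_nil] at ha
        rcases List.mem_cons.mp ha with rfl | ha
        · exact absurd rfl hax
        · simp at ha; exact absurd ha hay
      · intro a ha
        rw [Walk.support_cons, Walk.support_nil] at ha
        rw [Walk.support_cons]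
        rcases List.mem_cons.mp ha with rfl | ha
        · exact List.mem_cons_self
        · simp at ha
          subst ha
          exact List.mem_cons_of_mem _ (Walk.start_mem_support W')

lemma le_bcon {x : V} (n : ℕ) (f : Fin n → (v : V) × G.Walk x v)
    (hq : ∀ i, IsQual G (olt σ) r (f i).2)
    (hd : ∀ i j : Fin n, i ≠ j → ∀ w, w ∈ (f i).2.support → w ∈ (f j).2.support → w = x) :
    n ≤ bcon G (olt σ) r x := by
  apply le_csSup
  · -- bounded above by the cardinality of V
    refine ⟨Fintype.card V, ?_⟩
    rintro m ⟨g, hgq, hgd⟩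
    have hinj : Function.Injective (fun i : Fin m => (g i).1) := by
      intro i j hij
      by_contra hne
      simp only at hij
      have h1 : (g i).1 ∈ (g i).2.support := Walk.end_mem_support _
      have h2 : (g i).1 ∈ (g j).2.support := by
        rw [hij]; exact Walk.end_mem_support _
      have := hgd i j hne _ h1 h2
      exact (hgq i).2.2.1 this
    simpa using Fintype.card_le_of_injective _ hinj
  · exact ⟨f, hq, hd⟩

/-- Bound on the number of successors of the source `u` itself. -/
lemma root_bound {u : V} (s : Finset V) (hs : ∀ y ∈ s, y ∈ SuccS G σ r u u) :
    s.card ≤ bcon G (olt σ) r u := by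
  have hchoice : ∀ y : {y // y ∈ s}, ∃ (v : V) (hv : v ∈ reachSet G σ r u)
      (hx : u ∈ (thePath G σ r u v hv).support),
      u ≠ v ∧ (thePath G σ r u v hv).getVert
        (dep (thePath G σ r u v hv) u hx + 1) = (y : V) := fun y => hs y y.2
  choose vf hvf hxf hxvf hsucc using hchoice
  set e := s.equivFin.symm with he
  apply le_bcon s.card (fun i => ⟨vf (e i), thePath G σ r u (vf (e i)) (hvf (e i))⟩)
  · intro i
    exact thePath_qual G σ r u (vf (e i)) (hvf (e i))
  · intro i j hij t h1 h2
    by_contra htu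
    -- t is a common vertex distinct from u : successors at u agree
    have hyi := hsucc (e i)
    have hyj := hsucc (e j)
    have hdti : dep (thePath G σ r u (vf (e i)) (hvf (e i))) u (hxf (e i))
        < dep (thePath G σ r u (vf (e i)) (hvf (e i))) t h1 := by
      have h0 : dep (thePath G σ r u (vf (e i)) (hvf (e i))) u (hxf (e i)) = 0 :=
        dep_start (thePath_isPath (hvf (e i))) _
      have h1' : dep (thePath G σ r u (vf (e i)) (hvf (e i))) t h1 ≠ 0 :=
        fun h => htu (eq_start_of_dep_eq h1 h)
      omega
    have hshared := succ_shared (hvf (e i)) (hvf (e j)) (hxf (e i)) (hxf (e j)) h1 h2 hdti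
    rw [hyi, hyj] at hshared
    have : e i = e j := Subtype.ext hshared
    exact hij (e.injective this)

/-- Bound on the number of successors of an internal vertex `x ≠ u`. -/
lemma inner_bound {u x : V} (s : Finset V) (hs : ∀ y ∈ s, y ∈ SuccS G σ r u x)
    (hxu : x ≠ u) (hsne : s.Nonempty) :
    s.card + 1 ≤ bcon G (olt σ) r x := by
  have hchoice : ∀ y : {y // y ∈ s}, ∃ (v : V) (hv : v ∈ reachSet G σ r u)
      (hx : x ∈ (thePath G σ r u v hv).support),
      x ≠ v ∧ (thePath G σ r u v hv).getVert
        (dep (thePath G σ r u v hv) x hx + 1) = (y : V) := fun y => hs y y.2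
  choose vf hvf hxf hxvf hsucc using hchoice
  set e := s.equivFin.symm with he
  obtain ⟨y₀, hy₀⟩ := hsne
  set Y₀ : {y // y ∈ s} := ⟨y₀, hy₀⟩ with hY₀
  set P₀ := thePath G σ r u (vf Y₀) (hvf Y₀) with hP₀
  have hP₀q := thePath_qual G σ r u (vf Y₀) (hvf Y₀)
  have hxlt : olt σ x u := hP₀q.2.2.2.2 x (hxf Y₀) hxu (hxvf Y₀)
  -- backward truncated path towards u
  have hW₀p : ((P₀.takeUntil x (hxf Y₀)).reverse).IsPath :=
    ((hP₀q.1).takeUntil (hxf Y₀)).reverse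
  obtain ⟨z₀, T₀, hT₀q, hT₀s⟩ := trunc (r := r) (P₀.takeUntil x (hxf Y₀)).reverse hW₀p
    (by rw [Walk.length_reverse]
        exact le_trans (Walk.length_takeUntil_le _ _) hP₀q.2.1)
    (fun h => hxu h.symm) (fun h => olt_asymm hxlt h)
  have hT₀s' : ∀ a ∈ T₀.support, a ∈ (P₀.takeUntil x (hxf Y₀)).support := by
    intro a ha
    have := hT₀s a ha
    rwa [Walk.support_reverse, List.mem_reverse] at this
  -- forward truncated paths
  have hfwd : ∀ y : {y // y ∈ s}, ∃ (z : V)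
      (T : G.Walk x z), IsQual G (olt σ) r T ∧
      (∀ a ∈ T.support, a ∈ ((thePath G σ r u (vf y) (hvf y)).dropUntil x (hxf y)).support) := by
    intro y
    have hq := thePath_qual G σ r u (vf y) (hvf y)
    have hxlt' : olt σ x u := hq.2.2.2.2 x (hxf y) hxu (hxvf y)
    have hvlt : olt σ u (vf y) := (hvf y).1
    apply trunc (r := r) _ ((hq.1).dropUntil (hxf y))
      (le_trans (Walk.length_dropUntil_le _ _) hq.2.1)
      (fun h => (hxvf y) h.symm)
      (fun h => olt_asymm (olt_trans hxlt' hvlt) h)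
  choose zf Tf hTfq hTfs using hfwd
  -- assemble the family
  set F : Fin (s.card + 1) → (v : V) × G.Walk x v := fun i =>
    Fin.cases ⟨z₀, T₀⟩ (fun i' => ⟨zf (e i'), Tf (e i')⟩) i with hF
  -- the two territory lemmas
  have hAS : ∀ (y : {y // y ∈ s}) (t : V), t ∈ (P₀.takeUntil x (hxf Y₀)).support →
      t ∈ ((thePath G σ r u (vf y) (hvf y)).dropUntil x (hxf y)).support → t = x := by
    intro y t htA htS
    have htP₀ : t ∈ P₀.support := P₀.support_takeUntil_subset _ htA
    have htPy : t ∈ (thePath G σ r u (vf y) (hvf y)).support :=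
      (thePath G σ r u (vf y) (hvf y)).support_dropUntil_subset _ htS
    have e1 := dep_of_mem_take (thePath_isPath (hvf Y₀)) (hxf Y₀) htA
    have e2 := dep_of_mem_drop (thePath_isPath (hvf y)) (hxf y) htS
    have e3 := dep_eq_dep (hvf y) (hvf Y₀) htPy htP₀
    have e4 := dep_eq_dep (hvf y) (hvf Y₀) (hxf y) (hxf Y₀)
    have e5 : dep (thePath G σ r u (vf y) (hvf y)) t htPy
        = dep (thePath G σ r u (vf y) (hvf y)) x (hxf y) := by omega
    have g1 := getVert_dep (thePath G σ r u (vf y) (hvf y)) htPy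
    have g2 := getVert_dep (thePath G σ r u (vf y) (hvf y)) (hxf y)
    rw [← g1, e5, g2]
  have hSS : ∀ (y y' : {y // y ∈ s}), (y : V) ≠ (y' : V) → ∀ t,
      t ∈ ((thePath G σ r u (vf y) (hvf y)).dropUntil x (hxf y)).support →
      t ∈ ((thePath G σ r u (vf y') (hvf y')).dropUntil x (hxf y')).support → t = x := by
    intro y y' hyy' t htS htS'
    by_contra htx
    have htPy : t ∈ (thePath G σ r u (vf y) (hvf y)).support :=
      (thePath G σ r u (vf y) (hvf y)).support_dropUntil_subset _ htS
    have htPy' : t ∈ (thePath G σ r u (vf y') (hvf y')).support :=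
      (thePath G σ r u (vf y') (hvf y')).support_dropUntil_subset _ htS'
    have e2 := dep_of_mem_drop (thePath_isPath (hvf y)) (hxf y) htS
    have hdt : dep (thePath G σ r u (vf y) (hvf y)) x (hxf y)
        < dep (thePath G σ r u (vf y) (hvf y)) t htPy := by
      rcases lt_or_eq_of_le e2 with h | h
      · exact h
      · exfalso
        apply htx
        have g1 := getVert_dep (thePath G σ r u (vf y) (hvf y)) htPy
        have g2 := getVert_dep (thePath G σ r u (vf y) (hvf y)) (hxf y)
        rw [← g1, ← h, g2]
    have := succ_shared (hvf y) (hvf y') (hxf y) (hxf y') htPy htPy' hdt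
    rw [hsucc y, hsucc y'] at this
    exact hyy' this
  apply le_bcon (s.card + 1) F
  · intro i
    induction i using Fin.cases with
    | zero => exact hT₀q
    | succ i' => exact hTfq (e i')
  · intro i j hij t h1 h2
    induction i using Fin.cases with
    | zero =>
      induction j using Fin.cases with
      | zero => exact absurd rfl hij
      | succ j' =>
        exact hAS (e j') t (hT₀s' t h1) (hTfs (e j') t h2)
    | succ i' =>
      induction j using Fin.cases with
      | zero => exact hAS (e i') t (hT₀s' t h2) (hTfs (e i') t h1)
      | succ j' =>
        have hne : (e i' : V) ≠ (e j' : V) := fun h =>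
          hij (congrArg Fin.succ (e.injective (Subtype.ext h)))
        exact hSS (e i') (e j') hne t (hTfs (e i') t h1) (hTfs (e j') t h2)

end Branching
section ColCount

variable [DecidableEq V] [Fintype V] {G : SimpleGraph V} {σ : LinearOrder V} {r k : ℕ}

lemma set_inj_of_card (s : Set V) (m : ℕ) (hm : 1 ≤ m)
    (hcard : (Set.toFinite s).toFinset.card ≤ m) :
    ∃ g : V → Fin m, ∀ y ∈ s, ∀ y' ∈ s, g y = g y' → y = y' := by
  have hcard' : Fintype.card ((Set.toFinite s).toFinset : Finset V) ≤ Fintype.card (Fin m) := by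
    rw [Fintype.card_coe, Fintype.card_fin]
    exact hcard
  obtain ⟨emb⟩ := Function.Embedding.nonempty_iff_card_le.2 hcard'
  classical
  refine ⟨fun y => if h : y ∈ s then emb ⟨y, (Set.Finite.mem_toFinset _).2 h⟩ else ⟨0, hm⟩,
    fun y hy y' hy' hg => ?_⟩
  simp only [dif_pos hy, dif_pos hy'] at hg
  have := emb.injective hg
  exact congrArg Subtype.val this

lemma succ_root_card (hbc : ∀ x, bcon G (olt σ) r x ≤ k) (u : V) :
    (Set.toFinite (SuccS G σ r u u)).toFinset.card ≤ k := by
  refine le_trans (root_bound (Set.toFinite (SuccS G σ r u u)).toFinset ?_) (hbc u)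
  intro y hy
  rwa [Set.Finite.mem_toFinset] at hy

lemma succ_inner_card (hk : 2 ≤ k) (hbc : ∀ x, bcon G (olt σ) r x ≤ k) (u x : V)
    (hxu : x ≠ u) : (Set.toFinite (SuccS G σ r u x)).toFinset.card ≤ k - 1 := by
  set s := (Set.toFinite (SuccS G σ r u x)).toFinset with hs
  rcases s.eq_empty_or_nonempty with h | h
  · rw [h]; simp
  · have := inner_bound s (fun y hy => by rwa [Set.Finite.mem_toFinset] at hy) hxu h
    have h2 := hbc x
    omega

lemma exists_labels (hk : 2 ≤ k) (hbc : ∀ x, bcon G (olt σ) r x ≤ k) (u : V) :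
    ∃ (lR : V → Fin k) (lI : V → V → Fin (k-1)),
      (∀ y ∈ SuccS G σ r u u, ∀ y' ∈ SuccS G σ r u u, lR y = lR y' → y = y') ∧
      (∀ x, x ≠ u → ∀ y ∈ SuccS G σ r u x, ∀ y' ∈ SuccS G σ r u x,
        lI x y = lI x y' → y = y') := by
  obtain ⟨lR, hlR⟩ := set_inj_of_card (SuccS G σ r u u) k (by omega)
    (succ_root_card hbc u)
  have hI : ∀ x : V, ∃ g : V → Fin (k-1), x ≠ u →
      ∀ y ∈ SuccS G σ r u x, ∀ y' ∈ SuccS G σ r u x, g y = g y' → y = y' := by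
    intro x
    by_cases hxu : x ≠ u
    · obtain ⟨g, hg⟩ := set_inj_of_card (SuccS G σ r u x) (k-1) (by omega)
        (succ_inner_card hk hbc u x hxu)
      exact ⟨g, fun _ => hg⟩
    · exact ⟨fun _ => ⟨0, by omega⟩, fun h => absurd h hxu⟩
  choose lI hlI using hI
  exact ⟨lR, lI, hlR, hlI⟩

lemma path_len_pos {u v : V} (hv : v ∈ reachSet G σ r u) :
    1 ≤ (thePath G σ r u v hv).length := by
  by_contra h
  have h0 : (thePath G σ r u v hv).length = 0 := by omega
  have := (thePath G σ r u v hv).getVert_length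
  rw [h0, Walk.getVert_zero] at this
  exact (thePath_qual G σ r u v hv).2.2.1 this.symm

lemma getVert_ne_end {u v : V} (hv : v ∈ reachSet G σ r u) {i : ℕ}
    (hi : i < (thePath G σ r u v hv).length) : (thePath G σ r u v hv).getVert i ≠ v := by
  intro h
  have h2 := (thePath G σ r u v hv).getVert_length
  have := getVert_injOn (thePath_isPath hv) (le_of_lt hi) (le_refl _) (by rw [h, h2])
  omega

lemma getVert_ne_start {u v : V} (hv : v ∈ reachSet G σ r u) {i : ℕ}
    (hi0 : 0 < i) (hi : i ≤ (thePath G σ r u v hv).length) :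
    (thePath G σ r u v hv).getVert i ≠ u := by
  intro h
  have h2 := (thePath G σ r u v hv).getVert_zero
  have := getVert_injOn (thePath_isPath hv) hi (Nat.zero_le _) (by rw [h]; exact h2.symm)
  omega

lemma getVert_succ_mem_SuccS {u v : V} (hv : v ∈ reachSet G σ r u) {i : ℕ}
    (hi : i < (thePath G σ r u v hv).length) :
    (thePath G σ r u v hv).getVert (i+1) ∈ SuccS G σ r u ((thePath G σ r u v hv).getVert i) := by
  have hw : (thePath G σ r u v hv).getVert i ∈ (thePath G σ r u v hv).support :=
    getVert_mem_support _ (le_of_lt hi)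
  have hd : dep (thePath G σ r u v hv) ((thePath G σ r u v hv).getVert i) hw = i :=
    dep_getVert (thePath_isPath hv) (le_of_lt hi) hw
  exact ⟨v, hv, hw, getVert_ne_end hv hi, by rw [hd]⟩

/-- Label-agreement propagates to vertex agreement along canonical paths. -/
lemma code_agree {u v v' : V} (hv : v ∈ reachSet G σ r u) (hv' : v' ∈ reachSet G σ r u)
    (lR : V → Fin k) (lI : V → V → Fin (k-1))
    (hlR : ∀ y ∈ SuccS G σ r u u, ∀ y' ∈ SuccS G σ r u u, lR y = lR y' → y = y')
    (hlI : ∀ x, x ≠ u → ∀ y ∈ SuccS G σ r u x, ∀ y' ∈ SuccS G σ r u x,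
      lI x y = lI x y' → y = y')
    (hlen : (thePath G σ r u v hv).length ≤ (thePath G σ r u v' hv').length)
    (h0 : lR ((thePath G σ r u v hv).getVert 1) = lR ((thePath G σ r u v' hv').getVert 1))
    (h1 : ∀ i : ℕ, i + 2 ≤ (thePath G σ r u v hv).length →
      lI ((thePath G σ r u v hv).getVert (i+1)) ((thePath G σ r u v hv).getVert (i+2))
        = lI ((thePath G σ r u v' hv').getVert (i+1)) ((thePath G σ r u v' hv').getVert (i+2))) :
    ∀ i, i ≤ (thePath G σ r u v hv).length →
      (thePath G σ r u v hv).getVert i = (thePath G σ r u v' hv').getVert i := by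
  intro i
  induction i with
  | zero =>
    intro _
    rw [Walk.getVert_zero, Walk.getVert_zero]
  | succ i ih =>
    intro hi
    have hi' : i ≤ (thePath G σ r u v hv).length := by omega
    have hieq := ih hi'
    have hilt : i < (thePath G σ r u v hv).length := by omega
    have hilt' : i < (thePath G σ r u v' hv').length := by omega
    have hmem : (thePath G σ r u v hv).getVert (i+1)
        ∈ SuccS G σ r u ((thePath G σ r u v hv).getVert i) :=
      getVert_succ_mem_SuccS hv hilt
    have hmem' : (thePath G σ r u v' hv').getVert (i+1)
        ∈ SuccS G σ r u ((thePath G σ r u v hv).getVert i) := by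
      rw [hieq]
      exact getVert_succ_mem_SuccS hv' hilt'
    rcases Nat.eq_zero_or_pos i with rfl | hipos
    · -- use the root labels
      have hu : (thePath G σ r u v hv).getVert 0 = u := Walk.getVert_zero _
      rw [hu] at hmem hmem'
      exact hlR _ hmem _ hmem' h0
    · -- use the inner labels
      have hne : (thePath G σ r u v hv).getVert i ≠ u :=
        getVert_ne_start hv hipos hi'
      have hlab := h1 (i-1) (by omega)
      have hrw : i - 1 + 1 = i := by omega
      have hrw2 : i - 1 + 2 = i + 1 := by omega
      rw [hrw, hrw2] at hlab
      rw [← hieq] at hlab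
      exact hlI _ hne _ hmem _ hmem' hlab

lemma col_inj_aux (hk : 2 ≤ k) {u v v' : V}
    (hv : v ∈ reachSet G σ r u) (hv' : v' ∈ reachSet G σ r u)
    (lR : V → Fin k) (lI : V → V → Fin (k-1))
    (hlR : ∀ y ∈ SuccS G σ r u u, ∀ y' ∈ SuccS G σ r u u, lR y = lR y' → y = y')
    (hlI : ∀ x, x ≠ u → ∀ y ∈ SuccS G σ r u x, ∀ y' ∈ SuccS G σ r u x,
      lI x y = lI x y' → y = y')
    (hlen : (thePath G σ r u v hv).length ≤ (thePath G σ r u v' hv').length)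
    (h0 : lR ((thePath G σ r u v hv).getVert 1) = lR ((thePath G σ r u v' hv').getVert 1))
    (h1 : ∀ i : ℕ, i + 2 ≤ (thePath G σ r u v hv).length →
      lI ((thePath G σ r u v hv).getVert (i+1)) ((thePath G σ r u v hv).getVert (i+2))
        = lI ((thePath G σ r u v' hv').getVert (i+1)) ((thePath G σ r u v' hv').getVert (i+2))) :
    v = v' := by
  have hagree := code_agree hv hv' lR lI hlR hlI hlen h0 h1
    (thePath G σ r u v hv).length (le_refl _)
  have hvend : (thePath G σ r u v hv).getVert (thePath G σ r u v hv).length = v :=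
    Walk.getVert_length _
  rw [hvend] at hagree
  by_contra hne
  have hvmem : v ∈ (thePath G σ r u v' hv').support := by
    rw [hagree]
    exact getVert_mem_support _ hlen
  have hint := (thePath_qual G σ r u v' hv').2.2.2.2 v hvmem
    (fun h => olt_irrefl σ u (h ▸ hv.1)) hne
  exact olt_asymm hv.1 hint

lemma col_bound_u (hk : 2 ≤ k) (hbc : ∀ x, bcon G (olt σ) r x ≤ k) (hr : 1 ≤ r) (u : V) :
    (reachSet G σ r u).ncard ≤ k * (k - 1) ^ (r - 1) := by
  obtain ⟨lR, lI, hlR, hlI⟩ := exists_labels hk hbc u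
  have hF : ∃ F : (reachSet G σ r u) → Fin k × (Fin (r-1) → Fin (k-1)),
      Function.Injective F := by
    refine ⟨fun vv => (lR ((thePath G σ r u vv.1 vv.2).getVert 1),
      fun i => if h : i.1 + 2 ≤ (thePath G σ r u vv.1 vv.2).length then
        lI ((thePath G σ r u vv.1 vv.2).getVert (i.1+1))
           ((thePath G σ r u vv.1 vv.2).getVert (i.1+2)) else ⟨0, by omega⟩), ?_⟩
    rintro ⟨v, hv⟩ ⟨v', hv'⟩ heq
    have he0 := congrArg Prod.fst heq
    have he1 := congrArg Prod.snd heq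
    simp only at he0 he1
    have he1' := congrFun he1
    have key : ∀ (w w' : V) (hw : w ∈ reachSet G σ r u) (hw' : w' ∈ reachSet G σ r u),
        (thePath G σ r u w hw).length ≤ (thePath G σ r u w' hw').length →
        lR ((thePath G σ r u w hw).getVert 1) = lR ((thePath G σ r u w' hw').getVert 1) →
        (∀ i : Fin (r-1), (dite (i.1 + 2 ≤ (thePath G σ r u w hw).length)
          (fun h => lI ((thePath G σ r u w hw).getVert (i.1+1))
            ((thePath G σ r u w hw).getVert (i.1+2))) (fun h => (⟨0, by omega⟩ : Fin (k-1))))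
          = (dite (i.1 + 2 ≤ (thePath G σ r u w' hw').length)
          (fun h => lI ((thePath G σ r u w' hw').getVert (i.1+1))
            ((thePath G σ r u w' hw').getVert (i.1+2))) (fun h => (⟨0, by omega⟩ : Fin (k-1)))))
        → w = w' := by
      intro w w' hw hw' hle hh0 hh1
      apply col_inj_aux hk hw hw' lR lI hlR hlI hle hh0
      intro i hi2
      have hir : i < r - 1 := by
        have := (thePath_qual G σ r u w hw).2.1
        omega
      have := hh1 ⟨i, hir⟩
      rw [dif_pos hi2, dif_pos (le_trans hi2 hle)] at this
      exact this
    rcases le_total (thePath G σ r u v hv).length (thePath G σ r u v' hv').length with h | h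
    · exact Subtype.ext (key v v' hv hv' h he0 (fun i => he1' i))
    · exact Subtype.ext ((key v' v hv' hv h he0.symm (fun i => (he1' i).symm)).symm)
  obtain ⟨F, hFinj⟩ := hF
  have hcard : Nat.card (reachSet G σ r u) ≤
      Nat.card (Fin k × (Fin (r-1) → Fin (k-1))) :=
    Nat.card_le_card_of_injective F hFinj
  have hncard : (reachSet G σ r u).ncard = Nat.card (reachSet G σ r u) := rfl
  rw [← hncard] at hcard
  have hTcard : Nat.card (Fin k × (Fin (r-1) → Fin (k-1))) = k * (k-1)^(r-1) := by
    rw [Nat.card_eq_fintype_card, Fintype.card_prod, Fintype.card_fin, Fintype.card_fun,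
      Fintype.card_fin, Fintype.card_fin]
  rw [← hTcard]
  exact hcard

end ColCount
section WCol

variable [DecidableEq V] [Fintype V]

lemma thePath_len_le {G : SimpleGraph V} {σ : LinearOrder V} {r : ℕ} {x v : V} {m : ℕ}
    (hm : m ≤ r) (hvm : v ∈ reachSet G σ m x) :
    ∃ hv : v ∈ reachSet G σ r x, (thePath G σ r x v hv).length ≤ m := by
  obtain ⟨hlt, p, hp, hplen, hpint⟩ := hvm
  have hq : IsQual G (olt σ) r p :=
    ⟨hp, le_trans hplen hm, fun h => olt_irrefl σ x (h ▸ hlt), olt_asymm hlt, hpint⟩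
  have hv : v ∈ reachSet G σ r x := ⟨hlt, p, hp, le_trans hplen hm, hpint⟩
  exact ⟨hv, le_trans (thePath_min G σ r x v hv p hq) hplen⟩

variable (G : SimpleGraph V) (σ : LinearOrder V) (r k : ℕ) (L : V → V → V → Fin k)

/-- The label word of the canonical path from `x` to `v`. -/
noncomputable def lcw (x v : V) (hv : v ∈ reachSet G σ r x) : List (Fin k) :=
  (List.range (thePath G σ r x v hv).length).map
    (fun i => L x ((thePath G σ r x v hv).getVert i) ((thePath G σ r x v hv).getVert (i+1)))

lemma lcw_length (x v : V) (hv : v ∈ reachSet G σ r x) :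
    (lcw G σ r k L x v hv).length = (thePath G σ r x v hv).length := by
  simp [lcw]

/-- Decoding relation: `Dec u l v` iff `l` is a concatenation of canonical label words
along a chain of strong reachability steps from `u` to `v`. -/
inductive Dec : V → List (Fin k) → V → Prop
  | nil (x : V) : Dec x [] x
  | step (x y v : V) (l : List (Fin k)) (hy : y ∈ reachSet G σ r x)
      (h : Dec y l v) : Dec x (lcw G σ r k L x y hy ++ l) v

variable {G σ r k L}

lemma dec_cases {u v : V} {l : List (Fin k)} (h : Dec G σ r k L u l v) :
    (l = [] ∧ v = u) ∨ ∃ (y : V) (hy : y ∈ reachSet G σ r u) (l₂ : List (Fin k)),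
      l = lcw G σ r k L u y hy ++ l₂ ∧ Dec G σ r k L y l₂ v := by
  cases h with
  | nil => exact Or.inl ⟨rfl, rfl⟩
  | step x y v l hy hd => exact Or.inr ⟨y, hy, l, rfl, hd⟩

lemma dec_snoc {u y v : V} {l : List (Fin k)} (hd : Dec G σ r k L u l y)
    (hvr : v ∈ reachSet G σ r y) :
    Dec G σ r k L u (l ++ lcw G σ r k L y v hvr) v := by
  induction hd with
  | nil x =>
    have h := Dec.step (L := L) x v v [] hvr (Dec.nil (L := L) v)
    rw [List.append_nil] at h
    rw [List.nil_append]
    exact h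
  | step x y' v' l' hy' hd' ih =>
    rw [List.append_assoc]
    exact Dec.step (L := L) x y' v _ hy' (ih hvr)

lemma wcode_agree {u v v' : V} (hv : v ∈ reachSet G σ r u) (hv' : v' ∈ reachSet G σ r u)
    (hL : ∀ w, ∀ y ∈ SuccS G σ r u w, ∀ y' ∈ SuccS G σ r u w,
      L u w y = L u w y' → y = y')
    (hlen : (thePath G σ r u v hv).length ≤ (thePath G σ r u v' hv').length)
    (hlet : ∀ i, i < (thePath G σ r u v hv).length →
      L u ((thePath G σ r u v hv).getVert i) ((thePath G σ r u v hv).getVert (i+1))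
        = L u ((thePath G σ r u v' hv').getVert i) ((thePath G σ r u v' hv').getVert (i+1))) :
    ∀ i, i ≤ (thePath G σ r u v hv).length →
      (thePath G σ r u v hv).getVert i = (thePath G σ r u v' hv').getVert i := by
  intro i
  induction i with
  | zero => intro _; rw [Walk.getVert_zero, Walk.getVert_zero]
  | succ i ih =>
    intro hi
    have hi' : i ≤ (thePath G σ r u v hv).length := by omega
    have hieq := ih hi'
    have hilt : i < (thePath G σ r u v hv).length := by omega
    have hilt' : i < (thePath G σ r u v' hv').length := by omega
    have hmem : (thePath G σ r u v hv).getVert (i+1)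
        ∈ SuccS G σ r u ((thePath G σ r u v hv).getVert i) :=
      getVert_succ_mem_SuccS hv hilt
    have hmem' : (thePath G σ r u v' hv').getVert (i+1)
        ∈ SuccS G σ r u ((thePath G σ r u v hv).getVert i) := by
      rw [hieq]
      exact getVert_succ_mem_SuccS hv' hilt'
    have hlab := hlet i hilt
    rw [← hieq] at hlab
    exact hL _ _ hmem _ hmem' hlab

lemma lcw_prefix {u v v' : V} (hv : v ∈ reachSet G σ r u) (hv' : v' ∈ reachSet G σ r u)
    (hL : ∀ w, ∀ y ∈ SuccS G σ r u w, ∀ y' ∈ SuccS G σ r u w,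
      L u w y = L u w y' → y = y')
    (hpre : lcw G σ r k L u v hv <+: lcw G σ r k L u v' hv') : v = v' := by
  have hlen : (thePath G σ r u v hv).length ≤ (thePath G σ r u v' hv').length := by
    have := hpre.length_le
    rwa [lcw_length, lcw_length] at this
  have hlet : ∀ i, i < (thePath G σ r u v hv).length →
      L u ((thePath G σ r u v hv).getVert i) ((thePath G σ r u v hv).getVert (i+1))
        = L u ((thePath G σ r u v' hv').getVert i) ((thePath G σ r u v' hv').getVert (i+1)) := by
    intro i hi
    have hi1 : i < (lcw G σ r k L u v hv).length := by rwa [lcw_length]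
    have := hpre.getElem hi1
    simpa [lcw] using this
  have hagree := wcode_agree hv hv' hL hlen hlet (thePath G σ r u v hv).length (le_refl _)
  have hvend : (thePath G σ r u v hv).getVert (thePath G σ r u v hv).length = v :=
    Walk.getVert_length _
  rw [hvend] at hagree
  by_contra hne
  have hvmem : v ∈ (thePath G σ r u v' hv').support := by
    rw [hagree]
    exact getVert_mem_support _ hlen
  have hint := (thePath_qual G σ r u v' hv').2.2.2.2 v hvmem
    (fun h => olt_irrefl σ u (h ▸ hv.1)) hne
  exact olt_asymm hv.1 hint

lemma lcw_len_pos {u v : V} (hv : v ∈ reachSet G σ r u) :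
    1 ≤ (lcw G σ r k L u v hv).length := by
  rw [lcw_length]
  exact path_len_pos hv

lemma dec_unique (hL : ∀ u w, ∀ y ∈ SuccS G σ r u w, ∀ y' ∈ SuccS G σ r u w,
      L u w y = L u w y' → y = y') :
    ∀ (n : ℕ) (l : List (Fin k)), l.length = n → ∀ u v v',
      Dec G σ r k L u l v → Dec G σ r k L u l v' → v = v' := by
  intro n
  induction n using Nat.strong_induction_on with
  | _ n IH =>
  intro l hlen u v v' h1 h2
  rcases dec_cases h1 with ⟨rfl, rfl⟩ | ⟨y, hy, l₁, he1, hd1⟩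
  · rcases dec_cases h2 with ⟨_, rfl⟩ | ⟨y', hy', l₂, he2, hd2⟩
    · rfl
    · exfalso
      have hlen2 := congrArg List.length he2
      rw [List.length_append, lcw_length] at hlen2
      simp only [List.length_nil] at hlen2
      have hpos := path_len_pos hy'
      omega
  · rcases dec_cases h2 with ⟨rfl, rfl⟩ | ⟨y', hy', l₂, he2, hd2⟩
    · exfalso
      have h3 := congrArg List.length he1
      rw [List.length_append, lcw_length] at h3
      simp only [List.length_nil] at h3
      have hpos := path_len_pos hy
      omega
    · have hkey : ∀ (a a' : V) (ha : a ∈ reachSet G σ r u) (ha' : a' ∈ reachSet G σ r u)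
          (m m' : List (Fin k)), l = lcw G σ r k L u a ha ++ m →
          l = lcw G σ r k L u a' ha' ++ m' →
          (lcw G σ r k L u a ha).length ≤ (lcw G σ r k L u a' ha').length →
          a = a' := by
        intro a a' ha ha' m m' hm hm' hl
        have hp1 : lcw G σ r k L u a ha <+: l := ⟨m, hm.symm⟩
        have hp2 : lcw G σ r k L u a' ha' <+: l := ⟨m', hm'.symm⟩
        exact lcw_prefix ha ha' (hL u) (List.prefix_of_prefix_length_le hp1 hp2 hl)
      have hyy : y = y' := by
        rcases le_total (lcw G σ r k L u y hy).length (lcw G σ r k L u y' hy').length with h | h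
        · exact hkey y y' hy hy' l₁ l₂ he1 he2 h
        · exact (hkey y' y hy' hy l₂ l₁ he2 he1 h).symm
      subst hyy
      have hll : l₁ = l₂ := by
        rw [he1] at he2
        exact List.append_cancel_left he2
      subst hll
      have hlt : l₁.length < n := by
        have := congrArg List.length he1
        rw [List.length_append] at this
        have := lcw_len_pos (L := L) hy
        omega
      exact IH l₁.length hlt l₁ rfl y v v' hd1 hd2

variable (L)

lemma dec_exists (hbc : ∀ x, bcon G (olt σ) r x ≤ k) :
    ∀ (m : ℕ), m ≤ r → ∀ u v, v ∈ wreachSet G σ m u →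
      ∃ l, Dec G σ r k L u l v ∧ 1 ≤ l.length ∧ l.length ≤ m := by
  intro m
  induction m using Nat.strong_induction_on with
  | _ m IH =>
  intro hmr u v hv
  obtain ⟨hlt, p, hp, hplen, hpint⟩ := hv
  by_cases hall : ∀ w ∈ p.support, w ≠ u → w ≠ v → olt σ w u
  · have hvm : v ∈ reachSet G σ m u := ⟨hlt, p, hp, hplen, hall⟩
    obtain ⟨hvr, hle⟩ := thePath_len_le hmr hvm
    refine ⟨lcw G σ r k L u v hvr, ?_, lcw_len_pos hvr, by rw [lcw_length]; omega⟩
    have h := Dec.step (L := L) u v v [] hvr (Dec.nil (L := L) v)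
    rwa [List.append_nil] at h
  · push_neg at hall
    obtain ⟨w₀, hw₀p, hw₀u, hw₀v, hw₀⟩ := hall
    set s := (p.support.toFinset.erase u).erase v with hs
    have hw₀s : w₀ ∈ s := by
      rw [hs]
      exact Finset.mem_erase.2 ⟨hw₀v, Finset.mem_erase.2 ⟨hw₀u, List.mem_toFinset.2 hw₀p⟩⟩
    obtain ⟨y, hys, hymax⟩ := exists_min_rel (fun a b => olt σ b a)
      (fun h1 h2 => olt_trans h2 h1) (fun a => olt_irrefl σ a) s ⟨w₀, hw₀s⟩
    have hyv : y ≠ v := (Finset.mem_erase.1 hys).1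
    have hyu : y ≠ u := (Finset.mem_erase.1 (Finset.mem_erase.1 hys).2).1
    have hyp : y ∈ p.support :=
      List.mem_toFinset.1 (Finset.mem_erase.1 (Finset.mem_erase.1 hys).2).2
    have hymax' : ∀ b ∈ s, ¬ olt σ y b := hymax
    have huy : olt σ u y := by
      have h1 : olt σ u w₀ := olt_of_not (fun h => hw₀u h) hw₀
      by_contra h
      have hyu' : olt σ y u := olt_of_not (fun hh => hyu hh.symm) h
      exact hymax' w₀ hw₀s (olt_trans hyu' h1)
    have hApath := hp.takeUntil hyp
    have hBpath := hp.dropUntil hyp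
    have hAB := dep_add p hyp
    have hAlen : (p.takeUntil y hyp).length = dep p y hyp := rfl
    have hBlen1 : 1 ≤ (p.dropUntil y hyp).length := by
      by_contra h
      have h0 : (p.dropUntil y hyp).length = 0 := by omega
      have h2 := (p.dropUntil y hyp).getVert_length
      rw [h0, Walk.getVert_zero] at h2
      exact hyv h2
    have huB : u ∉ (p.dropUntil y hyp).support := by
      intro hu
      have h1 := dep_of_mem_drop hp hyp hu
      have h2 : dep p u (p.support_dropUntil_subset hyp hu) = 0 := dep_start hp _
      have h3 : dep p y hyp = 0 := by omega
      exact hyu (eq_start_of_dep_eq hyp h3)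
    have hvA : v ∉ (p.takeUntil y hyp).support := by
      intro hv'
      have h1 := dep_of_mem_take hp hyp hv'
      have h2 : dep p v (p.support_takeUntil_subset hyp hv') = p.length := dep_end hp _
      have h3 := dep_le p hyp
      have h4 : dep p y hyp = p.length := by omega
      exact hyv (eq_end_of_dep_eq hp hyp h4)
    have hmem_s : ∀ w ∈ p.support, w ≠ u → w ≠ v → w ∈ s := by
      intro w h1 h2 h3
      exact Finset.mem_erase.2 ⟨h3, Finset.mem_erase.2 ⟨h2, List.mem_toFinset.2 h1⟩⟩
    have hywr : y ∈ wreachSet G σ (p.takeUntil y hyp).length u := by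
      refine ⟨huy, p.takeUntil y hyp, hApath, le_refl _, ?_⟩
      intro w hw hwu hwy
      have hwp : w ∈ p.support := p.support_takeUntil_subset hyp hw
      have hwv : w ≠ v := fun h => hvA (h ▸ hw)
      have hws := hmem_s w hwp hwu hwv
      exact olt_of_not (fun h => hwy h.symm) (hymax' w hws)
    have hvB : v ∈ reachSet G σ (p.dropUntil y hyp).length y := by
      refine ⟨hpint y hyp hyu hyv, p.dropUntil y hyp, hBpath, le_refl _, ?_⟩
      intro w hw hwy hwv
      have hwp : w ∈ p.support := p.support_dropUntil_subset hyp hw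
      have hwu : w ≠ u := fun h => huB (h ▸ hw)
      have hws := hmem_s w hwp hwu hwv
      exact olt_of_not (fun h => hwy h.symm) (hymax' w hws)
    have hAlt : (p.takeUntil y hyp).length < m := by
      rw [hAlen]
      omega
    obtain ⟨l₁, hD₁, h11, h12⟩ := IH (p.takeUntil y hyp).length hAlt
      (le_trans (le_of_lt hAlt) hmr) u y hywr
    have hBm : (p.dropUntil y hyp).length ≤ r := by
      have : (p.dropUntil y hyp).length ≤ m := by omega
      omega
    obtain ⟨hvr, hle⟩ := thePath_len_le hBm hvB
    refine ⟨l₁ ++ lcw G σ r k L y v hvr, dec_snoc hD₁ hvr, ?_, ?_⟩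
    · rw [List.length_append]
      omega
    · rw [List.length_append, lcw_length]
      omega

end WCol
section Final

variable [DecidableEq V] [Fintype V] {G : SimpleGraph V} {σ : LinearOrder V} {r k : ℕ}

lemma exists_labels_all (hk : 2 ≤ k) (hbc : ∀ x, bcon G (olt σ) r x ≤ k) :
    ∃ L : V → V → V → Fin k, ∀ u w, ∀ y ∈ SuccS G σ r u w, ∀ y' ∈ SuccS G σ r u w,
      L u w y = L u w y' → y = y' := by
  have h : ∀ u w : V, ∃ g : V → Fin k, ∀ y ∈ SuccS G σ r u w, ∀ y' ∈ SuccS G σ r u w,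
      g y = g y' → y = y' := by
    intro u w
    apply set_inj_of_card _ k (by omega)
    by_cases hwu : w = u
    · subst hwu
      exact succ_root_card hbc w
    · exact le_trans (succ_inner_card hk hbc u w hwu) (by omega)
  choose L hL using h
  exact ⟨L, hL⟩

lemma wcol_bound_u (hk : 2 ≤ k) (hbc : ∀ x, bcon G (olt σ) r x ≤ k) (u : V) :
    (wreachSet G σ r u).ncard ≤ ∑ i ∈ Finset.range r, k ^ (i+1) := by
  obtain ⟨L, hL⟩ := exists_labels_all hk hbc
  have hsel : ∀ vv : (wreachSet G σ r u), ∃ l, Dec G σ r k L u l vv.1 ∧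
      1 ≤ l.length ∧ l.length ≤ r :=
    fun vv => dec_exists L hbc r (le_refl r) u vv.1 vv.2
  choose wrd hw1 hw2 hw3 using hsel
  have hF : ∃ F : (wreachSet G σ r u) → (Σ i : Fin r, (Fin (i.1+1) → Fin k)),
      Function.Injective F := by
    refine ⟨fun vv => ⟨⟨(wrd vv).length - 1, by have := hw2 vv; have := hw3 vv; omega⟩,
      fun j => (wrd vv).get ⟨j.1, lt_of_lt_of_le j.isLt
        (by show (wrd vv).length - 1 + 1 ≤ (wrd vv).length; have := hw2 vv; omega)⟩⟩, ?_⟩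
    intro a b heq
    have hfst := congrArg (fun s => s.1.1) heq
    simp only at hfst
    have hlen : (wrd a).length = (wrd b).length := by
      have := hw2 a; have := hw2 b; omega
    obtain ⟨hfst', hsnd⟩ := Sigma.mk.inj_iff.mp heq
    rw [Fin.heq_fun_iff (by omega : (wrd a).length - 1 + 1 = (wrd b).length - 1 + 1)] at hsnd
    have hl : wrd a = wrd b := by
      apply List.ext_get hlen
      intro n hn hn'
      have := hsnd ⟨n, by omega⟩
      simpa using this
    have hva := hw1 a
    have hvb := hw1 b
    rw [hl] at hva
    exact Subtype.ext (dec_unique hL (wrd b).length (wrd b) rfl u a.1 b.1 hva hvb)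
  obtain ⟨F, hFinj⟩ := hF
  have hcard : Nat.card (wreachSet G σ r u) ≤
      Nat.card (Σ i : Fin r, (Fin (i.1+1) → Fin k)) :=
    Nat.card_le_card_of_injective F hFinj
  have hncard : (wreachSet G σ r u).ncard = Nat.card (wreachSet G σ r u) := rfl
  rw [← hncard] at hcard
  have hTcard : Nat.card (Σ i : Fin r, (Fin (i.1+1) → Fin k))
      = ∑ i ∈ Finset.range r, k ^ (i+1) := by
    rw [Nat.card_eq_fintype_card, Fintype.card_sigma]
    rw [← Fin.sum_univ_eq_sum_range (fun i => k ^ (i+1)) r]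
    congr 1
    funext i
    rw [Fintype.card_fun, Fintype.card_fin, Fintype.card_fin]
  rw [← hTcard]
  exact hcard

lemma geom_mul (hk : 2 ≤ k) (n : ℕ) :
    (k - 1) * ∑ i ∈ Finset.range n, k ^ i = k ^ n - 1 := by
  induction n with
  | zero => simp
  | succ n ih =>
    rw [Finset.sum_range_succ, Nat.mul_add, ih]
    have h1 : 1 ≤ k ^ n := Nat.one_le_pow n k (by omega)
    have h2 : (k - 1) * k ^ n = k ^ (n+1) - k ^ n := by
      rw [Nat.sub_mul, one_mul, pow_succ, Nat.mul_comm]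
    have h3 : k ^ n ≤ k ^ (n+1) := Nat.pow_le_pow_right (by omega) (by omega)
    omega

lemma geom_div (hk : 2 ≤ k) (n : ℕ) :
    (k ^ n - 1) / (k - 1) = ∑ i ∈ Finset.range n, k ^ i := by
  apply Nat.div_eq_of_eq_mul_left (by omega : 0 < k - 1)
  rw [Nat.mul_comm, geom_mul hk]

lemma reach_zero (G : SimpleGraph V) (σ : LinearOrder V) (u : V) :
    reachSet G σ 0 u = ∅ := by
  ext v
  simp only [Set.mem_empty_iff_false, iff_false]
  rintro ⟨hlt, p, hp, hlen, hint⟩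
  have h0 : p.length = 0 := by omega
  have := p.getVert_length
  rw [h0, Walk.getVert_zero] at this
  subst this
  exact olt_irrefl σ u hlt

lemma wreach_zero (G : SimpleGraph V) (σ : LinearOrder V) (u : V) :
    wreachSet G σ 0 u = ∅ := by
  ext v
  simp only [Set.mem_empty_iff_false, iff_false]
  rintro ⟨hlt, p, hp, hlen, hint⟩
  have h0 : p.length = 0 := by omega
  have := p.getVert_length
  rw [h0, Walk.getVert_zero] at this
  subst this
  exact olt_irrefl σ u hlt

end Final

end AdmThm

theorem adm_bounds_col_wcol [Fintype V] (G : SimpleGraph V) (r k : ℕ) (hk : 2 ≤ k)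
    (hadm : admNum G r ≤ k) :
    colNum G r ≤ k * (k - 1) ^ (r - 1) ∧ wcolNum G r ≤ (k ^ (r + 1) - 1) / (k - 1) := by
  classical
  haveI : Nonempty (LinearOrder V) :=
    ⟨LinearOrder.lift' (Fintype.equivFin V) (Equiv.injective _)⟩
  obtain ⟨σ₀, hσ₀⟩ := Nat.sInf_mem (Set.range_nonempty (fun σ : LinearOrder V =>
    Finset.univ.sup fun u => bcon G (olt σ) r u))
  have hadm' : (Finset.univ.sup fun u => bcon G (olt σ₀) r u) ≤ k := by
    have heq : (Finset.univ.sup fun u => bcon G (olt σ₀) r u)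
        = sInf (Set.range fun σ : LinearOrder V =>
          Finset.univ.sup fun u => bcon G (olt σ) r u) := hσ₀
    rw [heq]
    exact hadm
  have hbc : ∀ x, bcon G (olt σ₀) r x ≤ k :=
    fun x => le_trans (Finset.le_sup (Finset.mem_univ x)) hadm'
  have hcol_le : colNum G r ≤ colOrd G σ₀ r := ciInf_le (OrderBot.bddBelow _) σ₀
  have hwcol_le : wcolNum G r ≤ wcolOrd G σ₀ r := ciInf_le (OrderBot.bddBelow _) σ₀
  rcases Nat.eq_zero_or_pos r with rfl | hr
  · constructor
    · refine le_trans hcol_le (le_trans (Finset.sup_le fun u _ => ?_) (Nat.zero_le _))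
      rw [AdmThm.reach_zero G σ₀ u, Set.ncard_empty]
    · refine le_trans hwcol_le (le_trans (Finset.sup_le fun u _ => ?_) (Nat.zero_le _))
      rw [AdmThm.wreach_zero G σ₀ u, Set.ncard_empty]
  · constructor
    · refine le_trans hcol_le (Finset.sup_le fun u _ => ?_)
      exact AdmThm.col_bound_u hk hbc hr u
    · refine le_trans hwcol_le (Finset.sup_le fun u _ => ?_)
      have h1 := AdmThm.wcol_bound_u hk hbc u
      have h2 := AdmThm.geom_div hk (r + 1)
      have h3 : ∑ i ∈ Finset.range (r+1), k ^ i
          = (∑ i ∈ Finset.range r, k ^ (i+1)) + 1 := by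
        rw [Finset.sum_range_succ']
        simp
      omega
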